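/- Let (p_n)_{n≥0} be a probability distribution on the natural numbers with finite mean m = ∑_{n≥0} n·p_n < ∞. Suppose there are α ∈ (0,1] and a function ℓ̄ : (0,1] → (0,∞), measurable and slowly varying at 0, such that for all z ∈ [0,1): ∑_{n≥0} p_n · z^n = 1 − (1−z)·m + (1−z)^{1+α} · ℓ̄(1−z). Then for every δ ∈ (0,α), ∑_{n≥0} n^{1+δ} · p_n < ∞. -/

import Mathlib

open Real Set Filter

/-- If an offspring distribution `(p_n)` with finite mean `m` has generating
function of Slack's form `∑ p_n z^n = 1 − (1−z)m + (1−z)^{1+α} ℓ̄(1−z)`, with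
`ℓ̄` slowly varying at `0`, then `∑ n^{1+δ} p_n < ∞` for every `δ ∈ (0,α)`. -/
theorem stmt_14 (p : ℕ → ℝ) (hp0 : ∀ n, 0 ≤ p n)
    (hp_sum : Summable p) (hp_total : ∑' n, p n = 1)
    (m : ℝ) (hm_sum : Summable (fun n : ℕ => (n : ℝ) * p n))
    (hm : m = ∑' n : ℕ, (n : ℝ) * p n)
    (α : ℝ) (hα0 : 0 < α) (hα1 : α ≤ 1)
    (ℓb : ℝ → ℝ) (hℓ_pos : ∀ x, 0 < x → x ≤ 1 → 0 < ℓb x) (hℓ_meas : Measurable ℓb)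
    (hℓ_sv : ∀ c > 0, Tendsto (fun x => ℓb (c * x) / ℓb x) (nhdsWithin 0 (Ioi 0)) (nhds 1))
    (hgen : ∀ z : ℝ, 0 ≤ z → z < 1 →
      ∑' n, p n * z ^ n = 1 - (1 - z) * m + (1 - z) ^ (1 + α) * ℓb (1 - z)) :
    ∀ δ : ℝ, 0 < δ → δ < α → Summable (fun n : ℕ => (n : ℝ) ^ (1 + δ) * p n) := by
  intro δ hδ0 hδα
  set ε : ℝ := (α - δ) / 2 with hε_def
  -- Lemma A: tail bound from the generating function
  have hA : ∀ x : ℝ, 0 < x → x ≤ 1 → ∀ F : Finset ℕ, (∀ n ∈ F, 2 ≤ (n : ℝ) * x) →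
      ∑ n ∈ F, (n : ℝ) * p n ≤ 2 * x ^ α * ℓb x := by
    intro x hx0 hx1 F hF
    set z := 1 - x with hz_def
    have hz0 : 0 ≤ z := by simp [hz_def]; linarith
    have hz1 : z < 1 := by simp [hz_def]; linarith
    have hzx : 1 - z = x := by simp [hz_def]
    have hsum1 : Summable (fun n => p n * z ^ n) := by
      apply Summable.of_nonneg_of_le (fun n => mul_nonneg (hp0 n) (pow_nonneg hz0 n)) (fun n => ?_) hp_sum
      have : z ^ n ≤ 1 := pow_le_one₀ hz0 hz1.le
      nlinarith [hp0 n]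
    set g : ℕ → ℝ := fun n => (p n * z ^ n - p n) + x * ((n : ℝ) * p n) with hg_def
    have hg_sum : Summable g := (hsum1.sub hp_sum).add (hm_sum.mul_left x)
    have hBern : ∀ n : ℕ, 1 - (n : ℝ) * x ≤ z ^ n := by
      intro n
      have := one_add_mul_le_pow (a := -x) (by linarith) n
      calc 1 - (n:ℝ)*x = 1 + (n:ℝ)*(-x) := by ring
      _ ≤ (1 + -x) ^ n := this
      _ = z ^ n := by rw [hz_def]; ring_nf
    have hg_nonneg : ∀ n, 0 ≤ g n := by
      intro n
      have h1 := hBern n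
      have h2 := hp0 n
      have : g n = p n * (z ^ n - (1 - (n:ℝ)*x)) := by rw [hg_def]; ring
      rw [this]
      exact mul_nonneg h2 (by linarith)
    have htsum : ∑' n, g n = x ^ (1 + α) * ℓb x := by
      rw [hg_def]
      rw [Summable.tsum_add (hsum1.sub hp_sum) (hm_sum.mul_left x),
          Summable.tsum_sub hsum1 hp_sum, tsum_mul_left, hgen z hz0 hz1, hp_total, hzx, ← hm]
      ring
    have hterm : ∀ n ∈ F, x / 2 * ((n : ℝ) * p n) ≤ g n := by
      intro n hn
      have h2 := hF n hn
      have h3 := hp0 n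
      have h4 : (0:ℝ) ≤ z ^ n := pow_nonneg hz0 n
      have : g n = p n * z ^ n + p n * ((n:ℝ)*x - 1) := by rw [hg_def]; ring
      rw [this]
      nlinarith
    have hsum_le : ∑ n ∈ F, x / 2 * ((n : ℝ) * p n) ≤ x ^ (1 + α) * ℓb x := by
      calc ∑ n ∈ F, x / 2 * ((n : ℝ) * p n) ≤ ∑ n ∈ F, g n := Finset.sum_le_sum hterm
      _ ≤ ∑' n, g n := Summable.sum_le_tsum F (fun n _ => hg_nonneg n) hg_sum
      _ = x ^ (1 + α) * ℓb x := htsum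
    rw [← Finset.mul_sum] at hsum_le
    have hx_pow : x ^ (1 + α) = x * x ^ α := by
      rw [Real.rpow_add hx0, Real.rpow_one]
    have h2 : x/2 * (∑ n ∈ F, (n:ℝ)*p n) ≤ x/2 * (2*x^α*ℓb x) := by
      calc x/2 * (∑ n ∈ F, (n:ℝ)*p n) ≤ x ^ (1+α) * ℓb x := hsum_le
      _ = x/2 * (2*x^α*ℓb x) := by rw [hx_pow]; ring
    exact le_of_mul_le_mul_left h2 (by linarith)
  -- Lemma B: Potter-type bound at dyadic points
  have hε : 0 < ε := by rw [hε_def]; linarith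
  have hBex : ∃ C : ℝ, 0 < C ∧ ∀ j : ℕ, ℓb ((2:ℝ)⁻¹ ^ j) ≤ C * ((2:ℝ) ^ ε) ^ j := by
    set b : ℝ := (2:ℝ) ^ ε with hb_def
    have hb1 : 1 < b := Real.one_lt_rpow_iff_of_pos (by norm_num) |>.mpr (Or.inl ⟨by norm_num, hε⟩)
    have hxj_pos : ∀ j : ℕ, (0:ℝ) < (2:ℝ)⁻¹ ^ j := fun j => pow_pos (by norm_num) j
    have hxj_le1 : ∀ j : ℕ, (2:ℝ)⁻¹ ^ j ≤ 1 := fun j => pow_le_one₀ (by norm_num) (by norm_num)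
    have hseq : Tendsto (fun j : ℕ => (2:ℝ)⁻¹ ^ j) atTop (nhdsWithin 0 (Ioi 0)) := by
      apply tendsto_nhdsWithin_of_tendsto_nhds_of_eventually_within
      · exact tendsto_pow_atTop_nhds_zero_of_lt_one (by norm_num) (by norm_num)
      · exact Eventually.of_forall (fun j => hxj_pos j)
    have hcomp : Tendsto (fun j : ℕ => ℓb ((2:ℝ)⁻¹ * (2:ℝ)⁻¹ ^ j) / ℓb ((2:ℝ)⁻¹ ^ j)) atTop (nhds 1) :=
      (hℓ_sv (2:ℝ)⁻¹ (by norm_num)).comp hseq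
    have hev : ∀ᶠ j : ℕ in atTop, ℓb ((2:ℝ)⁻¹ * (2:ℝ)⁻¹ ^ j) / ℓb ((2:ℝ)⁻¹ ^ j) < b :=
      hcomp.eventually_lt_const hb1
    obtain ⟨N, hN⟩ := eventually_atTop.mp hev
    have hstep : ∀ j, N ≤ j → ℓb ((2:ℝ)⁻¹ ^ (j+1)) ≤ b * ℓb ((2:ℝ)⁻¹ ^ j) := by
      intro j hj
      have h1 := hN j hj
      have h2 := hℓ_pos _ (hxj_pos j) (hxj_le1 j)
      rw [div_lt_iff₀ h2] at h1
      have : (2:ℝ)⁻¹ ^ (j+1) = (2:ℝ)⁻¹ * (2:ℝ)⁻¹ ^ j := by ring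
      rw [this]; linarith
    have hkey : ∀ k : ℕ, ℓb ((2:ℝ)⁻¹ ^ (N+k)) ≤ ℓb ((2:ℝ)⁻¹ ^ N) * b ^ k := by
      intro k
      induction k with
      | zero => simp
      | succ k ih =>
        calc ℓb ((2:ℝ)⁻¹ ^ (N+(k+1))) = ℓb ((2:ℝ)⁻¹ ^ ((N+k)+1)) := by ring_nf
        _ ≤ b * ℓb ((2:ℝ)⁻¹ ^ (N+k)) := hstep _ (Nat.le_add_right N k)
        _ ≤ b * (ℓb ((2:ℝ)⁻¹ ^ N) * b ^ k) := by
            apply mul_le_mul_of_nonneg_left ih (by linarith)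
        _ = ℓb ((2:ℝ)⁻¹ ^ N) * b ^ (k+1) := by ring
    set C0 : ℝ := (Finset.range (N+1)).sup' (by simp) (fun j => ℓb ((2:ℝ)⁻¹ ^ j)) with hC0
    set C : ℝ := max C0 (ℓb ((2:ℝ)⁻¹ ^ N)) with hC
    have hCpos : 0 < C := lt_of_lt_of_le (hℓ_pos _ (hxj_pos N) (hxj_le1 N)) (le_max_right _ _)
    refine ⟨C, hCpos, fun j => ?_⟩
    have hbj : (1:ℝ) ≤ b ^ j := one_le_pow₀ hb1.le
    rcases le_or_gt j N with hjN | hjN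
    · have h1 : ℓb ((2:ℝ)⁻¹ ^ j) ≤ C0 :=
        Finset.le_sup' (f := fun j => ℓb ((2:ℝ)⁻¹ ^ j)) (Finset.mem_range.mpr (by omega))
      calc ℓb ((2:ℝ)⁻¹ ^ j) ≤ C0 := h1
      _ ≤ C := le_max_left _ _
      _ ≤ C * b ^ j := le_mul_of_one_le_right hCpos.le hbj
    · obtain ⟨k, rfl⟩ := Nat.exists_eq_add_of_le hjN.le
      calc ℓb ((2:ℝ)⁻¹ ^ (N+k)) ≤ ℓb ((2:ℝ)⁻¹ ^ N) * b ^ k := hkey k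
      _ ≤ C * b ^ (N+k) := by
          apply mul_le_mul (le_max_right _ _) (pow_le_pow_right₀ hb1.le (by omega)) (by positivity)
            hCpos.le
  obtain ⟨C, hCpos, hB⟩ := hBex
  -- Final assembly via dyadic decomposition
  clear hε
  have hε : 0 < ε := by rw [hε_def]; linarith
  have hpowpow : ∀ (a t : ℝ), 0 ≤ a → ∀ k : ℕ, ((a ^ k : ℝ)) ^ t = (a ^ t) ^ k := by
    intro a t ha k
    rw [← Real.rpow_natCast a k, ← Real.rpow_mul ha, mul_comm, Real.rpow_mul ha,
      Real.rpow_natCast]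
  set f : ℕ → ℝ := fun n => (n : ℝ) ^ (1 + δ) * p n with hf_def
  have hf_nonneg : ∀ n, 0 ≤ f n := fun n => mul_nonneg (Real.rpow_nonneg (Nat.cast_nonneg n) _) (hp0 n)
  set q : ℝ := (2:ℝ) ^ δ * ((2:ℝ)⁻¹) ^ α * (2:ℝ) ^ ε with hq_def
  have hq_eq : q = (2:ℝ) ^ (δ + ε - α) := by
    have h1 : ((2:ℝ)⁻¹) ^ α = (2:ℝ) ^ (-α) := by
      rw [← Real.rpow_neg_one, ← Real.rpow_mul (by norm_num : (0:ℝ) ≤ 2)]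
      norm_num
    rw [hq_def, h1, ← Real.rpow_add (by norm_num : (0:ℝ) < 2),
      ← Real.rpow_add (by norm_num : (0:ℝ) < 2)]
    ring_nf
  have hq_pos : 0 < q := by rw [hq_eq]; positivity
  have hq_lt1 : q < 1 := by
    rw [hq_eq]
    exact Real.rpow_lt_one_of_one_lt_of_neg (by norm_num) (by rw [hε_def]; linarith)
  set D : ℝ := 2 * C * ((2:ℝ) ^ δ) ^ 2 with hD_def
  have hD_pos : 0 < D := by
    have : (0:ℝ) < (2:ℝ) ^ δ := Real.rpow_pos_of_pos (by norm_num) δ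
    positivity
  -- block bound
  have hblock : ∀ j : ℕ, ∑ n ∈ Finset.Ico ((2:ℕ)^(j+1)) (2^(j+2)), f n ≤ D * q ^ j := by
    intro j
    have hx0 : (0:ℝ) < (2:ℝ)⁻¹ ^ j := pow_pos (by norm_num) j
    have hx1 : (2:ℝ)⁻¹ ^ j ≤ 1 := pow_le_one₀ (by norm_num) (by norm_num)
    have step1 : ∀ n ∈ Finset.Ico ((2:ℕ)^(j+1)) (2^(j+2)), f n ≤ ((2:ℝ)^δ)^(j+2) * ((n:ℝ) * p n) := by
      intro n hn
      obtain ⟨hn1, hn2⟩ := Finset.mem_Ico.mp hn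
      have hn_pos : (0:ℝ) < n := by
        have : 0 < n := lt_of_lt_of_le (Nat.pow_pos (by norm_num)) hn1
        exact_mod_cast this
      have hnδ : (n:ℝ) ^ δ ≤ ((2:ℝ)^δ)^(j+2) := by
        rw [← hpowpow 2 δ (by norm_num) (j+2)]
        apply Real.rpow_le_rpow hn_pos.le _ hδ0.le
        calc (n:ℝ) ≤ ((2^(j+2) : ℕ) : ℝ) := by exact_mod_cast hn2.le
        _ = (2:ℝ)^(j+2) := by push_cast; ring
      have : f n = (n:ℝ)^δ * ((n:ℝ) * p n) := by
        rw [hf_def]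
        simp only
        rw [Real.rpow_add hn_pos, Real.rpow_one]
        ring
      rw [this]
      exact mul_le_mul_of_nonneg_right hnδ (mul_nonneg hn_pos.le (hp0 n))
    have step2 : ∑ n ∈ Finset.Ico ((2:ℕ)^(j+1)) (2^(j+2)), (n:ℝ) * p n
        ≤ 2 * ((2:ℝ)⁻¹ ^ j) ^ α * ℓb ((2:ℝ)⁻¹ ^ j) := by
      apply hA _ hx0 hx1
      intro n hn
      obtain ⟨hn1, _⟩ := Finset.mem_Ico.mp hn
      have h2 : ((2:ℕ)^(j+1) : ℝ) ≤ (n:ℝ) := by exact_mod_cast hn1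
      calc (2:ℝ) = (2:ℝ)^(j+1) * (2:ℝ)⁻¹ ^ j := by
            rw [pow_succ, mul_comm ((2:ℝ)^j) 2, mul_assoc, ← mul_pow]
            norm_num
      _ ≤ (n:ℝ) * (2:ℝ)⁻¹ ^ j := by
            apply mul_le_mul_of_nonneg_right _ hx0.le
            calc (2:ℝ)^(j+1) = ((2:ℕ)^(j+1) : ℝ) := by push_cast; ring
            _ ≤ (n:ℝ) := h2
    calc ∑ n ∈ Finset.Ico ((2:ℕ)^(j+1)) (2^(j+2)), f n
        ≤ ∑ n ∈ Finset.Ico ((2:ℕ)^(j+1)) (2^(j+2)), ((2:ℝ)^δ)^(j+2) * ((n:ℝ) * p n) :=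
          Finset.sum_le_sum step1
    _ = ((2:ℝ)^δ)^(j+2) * ∑ n ∈ Finset.Ico ((2:ℕ)^(j+1)) (2^(j+2)), (n:ℝ) * p n := by
          rw [Finset.mul_sum]
    _ ≤ ((2:ℝ)^δ)^(j+2) * (2 * ((2:ℝ)⁻¹ ^ j) ^ α * ℓb ((2:ℝ)⁻¹ ^ j)) := by
          apply mul_le_mul_of_nonneg_left step2 (by positivity)
    _ ≤ ((2:ℝ)^δ)^(j+2) * (2 * ((2:ℝ)⁻¹ ^ j) ^ α * (C * ((2:ℝ) ^ ε) ^ j)) := by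
          apply mul_le_mul_of_nonneg_left _ (by positivity)
          apply mul_le_mul_of_nonneg_left (hB j)
          have : (0:ℝ) < ((2:ℝ)⁻¹ ^ j) ^ α := Real.rpow_pos_of_pos hx0 α
          positivity
    _ = D * q ^ j := by
          rw [hpowpow _ α (by norm_num) j, hD_def, hq_def]
          ring
  -- dyadic decomposition of range (2^(K+1))
  have hdecomp : ∀ K : ℕ, ∑ i ∈ Finset.range (2^(K+1)), f i
      = ∑ i ∈ Finset.range 2, f i + ∑ j ∈ Finset.range K, ∑ n ∈ Finset.Ico ((2:ℕ)^(j+1)) (2^(j+2)), f n := by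
    intro K
    induction K with
    | zero => simp
    | succ K ih =>
      have h1 : (2:ℕ)^(K+1) ≤ 2^(K+2) := Nat.pow_le_pow_right (by norm_num) (by omega)
      rw [Finset.range_eq_Ico, ← Finset.sum_Ico_consecutive f (Nat.zero_le (2^(K+1))) h1,
        ← Finset.range_eq_Ico, ih]
      conv_rhs => rw [Finset.sum_range_succ (fun x => ∑ i ∈ Finset.Ico ((2:ℕ)^(x+1)) (2^(x+2)), f i) K]
      ring
  -- geometric bound
  have hgeom : ∀ K : ℕ, ∑ j ∈ Finset.range K, D * q ^ j ≤ D * (1 - q)⁻¹ := by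
    intro K
    rw [← Finset.mul_sum]
    apply mul_le_mul_of_nonneg_left _ hD_pos.le
    calc ∑ j ∈ Finset.range K, q ^ j ≤ ∑' j : ℕ, q ^ j :=
          Summable.sum_le_tsum _ (fun i _ => pow_nonneg hq_pos.le i) (summable_geometric_of_lt_one hq_pos.le hq_lt1)
    _ = (1 - q)⁻¹ := tsum_geometric_of_lt_one hq_pos.le hq_lt1
  -- partial sums bounded
  apply summable_of_sum_range_le hf_nonneg (c := ∑ i ∈ Finset.range 2, f i + D * (1-q)⁻¹)
  intro M
  have hM : M ≤ 2^(M+1) := le_of_lt (lt_trans (Nat.lt_two_pow_self (n := M)) (Nat.pow_lt_pow_right (by norm_num) (by omega)))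
  calc ∑ i ∈ Finset.range M, f i ≤ ∑ i ∈ Finset.range (2^(M+1)), f i := by
        apply Finset.sum_le_sum_of_subset_of_nonneg (Finset.range_subset_range.mpr hM)
        intro i _ _; exact hf_nonneg i
  _ = ∑ i ∈ Finset.range 2, f i + ∑ j ∈ Finset.range M, ∑ n ∈ Finset.Ico ((2:ℕ)^(j+1)) (2^(j+2)), f n :=
        hdecomp M
  _ ≤ ∑ i ∈ Finset.range 2, f i + ∑ j ∈ Finset.range M, D * q ^ j := by
        apply add_le_add_right (Finset.sum_le_sum (fun j _ => hblock j))
  _ ≤ ∑ i ∈ Finset.range 2, f i + D * (1-q)⁻¹ := add_le_add_right (hgeom M) _
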